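/- For every dimension d ≥ 2 and every n ≥ 1, 2·W_d(n) ≤ M_d(n,n): if an n-point set P has W pairwise nonparallel unit-distance pairs in some norm with strictly convex unit sphere S, then the difference set P + (−P) intersects S in at least 2W points, and these points are convexly independent. -/

import Mathlib

open Pointwise Filter

noncomputable section

/-- A set in `ℝ^d` is convexly independent if no point of it lies in the
convex hull of the other points. -/
def ConvInd {d : ℕ} (S : Set (Fin d → ℝ)) : Prop :=
  ∀ p ∈ S, p ∉ convexHull ℝ (S \ {p})

/-- `Efun d n` : the maximum, over `n`-point sets `P ⊂ ℝ^d`, of the number of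
unordered pairs of distinct points of `P` whose midpoints are pairwise distinct
and form a convexly independent set.  Unordered pairs are encoded as ordered
pairs with the reversed pair excluded. -/
def Efun (d n : ℕ) : ℕ :=
  sSup {k | ∃ (P : Finset (Fin d → ℝ)) (T : Finset ((Fin d → ℝ) × (Fin d → ℝ))),
    P.card = n ∧
    (∀ e ∈ T, e.1 ∈ P ∧ e.2 ∈ P ∧ e.1 ≠ e.2 ∧ (e.2, e.1) ∉ T) ∧
    Set.InjOn (fun e : (Fin d → ℝ) × (Fin d → ℝ) => midpoint ℝ e.1 e.2) ↑T ∧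
    ConvInd ((fun e : (Fin d → ℝ) × (Fin d → ℝ) => midpoint ℝ e.1 e.2) '' ↑T) ∧
    T.card = k}

/-- `Mfun d m n` : the maximum, over `m`-point sets `P` and `n`-point sets `Q` in `ℝ^d`,
of the size of a convexly independent subset of the Minkowski sum `P + Q`. -/
def Mfun (d m n : ℕ) : ℕ :=
  sSup {k | ∃ P Q S : Finset (Fin d → ℝ),
    P.card = m ∧ Q.card = n ∧
    (S : Set (Fin d → ℝ)) ⊆ (P : Set (Fin d → ℝ)) + (Q : Set (Fin d → ℝ)) ∧
    ConvInd (S : Set (Fin d → ℝ)) ∧ S.card = k}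

/-- A norm on `ℝ^d` whose unit ball is strictly convex (the unit sphere contains
no nondegenerate segment, expressed via midpoints of distinct unit vectors). -/
structure StrictNorm (d : ℕ) where
  toFun : (Fin d → ℝ) → ℝ
  eq_zero_iff : ∀ x, toFun x = 0 ↔ x = 0
  smul_eq : ∀ (a : ℝ) (x : Fin d → ℝ), toFun (a • x) = |a| * toFun x
  add_le : ∀ x y, toFun (x + y) ≤ toFun x + toFun y
  strictly_convex : ∀ x y, toFun x = 1 → toFun y = 1 → x ≠ y →
    toFun ((1 / 2 : ℝ) • (x + y)) < 1

/-- A (not necessarily strictly convex) norm on `ℝ^d`. -/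
structure NormOn (d : ℕ) where
  toFun : (Fin d → ℝ) → ℝ
  eq_zero_iff : ∀ x, toFun x = 0 ↔ x = 0
  smul_eq : ∀ (a : ℝ) (x : Fin d → ℝ), toFun (a • x) = |a| * toFun x
  add_le : ∀ x y, toFun (x + y) ≤ toFun x + toFun y

/-- `Wfun d n` : the maximum, over `n`-point sets `S ⊂ ℝ^d` and strictly convex
norms on `ℝ^d`, of the number of pairwise nonparallel unit-distance pairs in `S`.
(The nonparallelity condition between distinct ordered pairs automatically rules
out listing any unordered pair twice.) -/
def Wfun (d n : ℕ) : ℕ :=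
  sSup {k | ∃ (S : Finset (Fin d → ℝ)) (ν : StrictNorm d)
      (T : Finset ((Fin d → ℝ) × (Fin d → ℝ))),
    S.card = n ∧
    (∀ e ∈ T, e.1 ∈ S ∧ e.2 ∈ S ∧ ν.toFun (e.1 - e.2) = 1) ∧
    (∀ e ∈ T, ∀ f ∈ T, e ≠ f → ∀ c : ℝ, e.1 - e.2 ≠ c • (f.1 - f.2)) ∧
    T.card = k}

/-- `Ufun d n` : the maximum, over `n`-point sets `S ⊂ ℝ^d` and strictly convex
norms on `ℝ^d`, of the number of unordered unit-distance pairs in `S`. -/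
def Ufun (d n : ℕ) : ℕ :=
  sSup {k | ∃ (S : Finset (Fin d → ℝ)) (ν : StrictNorm d)
      (T : Finset ((Fin d → ℝ) × (Fin d → ℝ))),
    S.card = n ∧
    (∀ e ∈ T, e.1 ∈ S ∧ e.2 ∈ S ∧ e.1 ≠ e.2 ∧ ν.toFun (e.1 - e.2) = 1 ∧ (e.2, e.1) ∉ T) ∧
    T.card = k}

/-- `Dfun d n` : the maximum, over `n`-point sets `S ⊂ ℝ^d` and strictly convex
norms on `ℝ^d`, of the number of unordered diameter pairs in `S` (pairs of points
whose distance equals the diameter `D` of `S` in the norm). -/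
def Dfun (d n : ℕ) : ℕ :=
  sSup {k | ∃ (S : Finset (Fin d → ℝ)) (ν : StrictNorm d)
      (T : Finset ((Fin d → ℝ) × (Fin d → ℝ))) (D : ℝ),
    S.card = n ∧
    (∀ p ∈ S, ∀ q ∈ S, ν.toFun (p - q) ≤ D) ∧
    (∃ p ∈ S, ∃ q ∈ S, ν.toFun (p - q) = D) ∧
    (∀ e ∈ T, e.1 ∈ S ∧ e.2 ∈ S ∧ e.1 ≠ e.2 ∧ ν.toFun (e.1 - e.2) = D ∧ (e.2, e.1) ∉ T) ∧
    T.card = k}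

/-- A family of sets in `ℝ^d` is strictly antipodal if for each pair of points
`p ∈ A i`, `q ∈ A j` with `i ≠ j` there is a linear functional `φ` with
`φ p < φ r < φ q` for every other point `r` of the union. -/
def StrictlyAntipodal {d : ℕ} {ι : Type*} (A : ι → Set (Fin d → ℝ)) : Prop :=
  ∀ i j, i ≠ j → ∀ p ∈ A i, ∀ q ∈ A j, ∃ φ : (Fin d → ℝ) →ₗ[ℝ] ℝ,
    ∀ r ∈ ⋃ t, A t, r ≠ p → r ≠ q → φ p < φ r ∧ φ r < φ q

/-- `aconst d` = `a(d)` : the largest `k` such that for every `m` there is a strictly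
antipodal family of `k` sets in `ℝ^d`, each of size at least `m`. -/
def aconst (d : ℕ) : ℕ :=
  sSup {k | ∀ m : ℕ, ∃ A : Fin k → Finset (Fin d → ℝ),
    (∀ i, m ≤ (A i).card) ∧ StrictlyAntipodal (fun i => ((A i : Set (Fin d → ℝ))))}

/-- The set of midpoints between points in different members of a family of finite sets. -/
def midSet {d : ℕ} {ι : Type*} (B : ι → Finset (Fin d → ℝ)) : Set (Fin d → ℝ) :=
  {x | ∃ i j, i ≠ j ∧ ∃ p ∈ B i, ∃ q ∈ B j, x = midpoint ℝ p q}

/-- The set of differences between points in different members of a family of sets. -/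
def diffSet {d : ℕ} {ι : Type*} (A : ι → Set (Fin d → ℝ)) : Set (Fin d → ℝ) :=
  {x | ∃ i j, i ≠ j ∧ ∃ p ∈ A i, ∃ q ∈ A j, x = p - q}


namespace TwoWMAux

variable {d : ℕ}

lemma sn_neg (ν : StrictNorm d) (x : Fin d → ℝ) : ν.toFun (-x) = ν.toFun x := by
  have := ν.smul_eq (-1) x
  simpa using this

lemma sn_nonneg (ν : StrictNorm d) (x : Fin d → ℝ) : 0 ≤ ν.toFun x := by
  have h0 : ν.toFun 0 = 0 := (ν.eq_zero_iff 0).2 rfl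
  have h1 := ν.add_le x (-x)
  rw [add_neg_cancel, h0, sn_neg] at h1
  linarith

lemma sn_tri (ν : StrictNorm d) (c e : ℝ) (z w : Fin d → ℝ) :
    ν.toFun (c • z + e • w) ≤ |c| * ν.toFun z + |e| * ν.toFun w := by
  calc ν.toFun (c • z + e • w) ≤ ν.toFun (c • z) + ν.toFun (e • w) := ν.add_le _ _
  _ = |c| * ν.toFun z + |e| * ν.toFun w := by rw [ν.smul_eq, ν.smul_eq]

lemma sn_ball_convex (ν : StrictNorm d) : Convex ℝ {y : Fin d → ℝ | ν.toFun y ≤ 1} := by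
  intro x hx y hy a b ha hb hab
  have := sn_tri ν a b x y
  rw [abs_of_nonneg ha, abs_of_nonneg hb] at this
  have hax : a * ν.toFun x ≤ a * 1 := by
    have := mul_le_mul_of_nonneg_left hx ha; simpa using this
  have hbx : b * ν.toFun y ≤ b * 1 := by
    have := mul_le_mul_of_nonneg_left hy hb; simpa using this
  simp only [Set.mem_setOf_eq]
  nlinarith

lemma sn_strict_seg (ν : StrictNorm d) (u v : Fin d → ℝ) (hu : ν.toFun u ≤ 1)
    (hv : ν.toFun v ≤ 1) (huv : u ≠ v) (a b : ℝ) (ha : 0 < a) (hb : 0 < b)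
    (hab : a + b = 1) : ν.toFun (a • u + b • v) < 1 := by
  have tri := sn_tri ν a b u v
  rw [abs_of_nonneg ha.le, abs_of_nonneg hb.le] at tri
  rcases lt_or_eq_of_le hu with hu1 | hu1
  · have : a * ν.toFun u + b * ν.toFun v < a * 1 + b * 1 := by
      have h2 : b * ν.toFun v ≤ b * 1 := mul_le_mul_of_nonneg_left hv hb.le
      have h1 : a * ν.toFun u < a * 1 := by exact mul_lt_mul_of_pos_left hu1 ha
      linarith
    calc ν.toFun (a • u + b • v) ≤ _ := tri
    _ < a * 1 + b * 1 := this
    _ = 1 := by linarith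
  rcases lt_or_eq_of_le hv with hv1 | hv1
  · have : a * ν.toFun u + b * ν.toFun v < a * 1 + b * 1 := by
      have h2 : b * ν.toFun v < b * 1 := mul_lt_mul_of_pos_left hv1 hb
      have h1 : a * ν.toFun u ≤ a * 1 := mul_le_mul_of_nonneg_left hu ha.le
      linarith
    calc ν.toFun (a • u + b • v) ≤ _ := tri
    _ < a * 1 + b * 1 := this
    _ = 1 := by linarith
  -- both norms equal one
  have hm : ν.toFun ((1 / 2 : ℝ) • (u + v)) < 1 :=
    ν.strictly_convex u v hu1 hv1 huv
  set m := (1 / 2 : ℝ) • (u + v) with hm_def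
  have key : ∀ c e : ℝ, 0 ≤ c → 0 < e →
      ν.toFun (c • u + e • m) ≤ c * ν.toFun u + e * ν.toFun m ∧
      ν.toFun (c • v + e • m) ≤ c * ν.toFun v + e * ν.toFun m := by
    intro c e hc he
    constructor
    · have := sn_tri ν c e u m; rwa [abs_of_nonneg hc, abs_of_nonneg he.le] at this
    · have := sn_tri ν c e v m; rwa [abs_of_nonneg hc, abs_of_nonneg he.le] at this
  rcases le_or_gt b a with hba | hba
  · -- a ≥ b ;  a•u + b•v = (a-b)•u + (2b)•m
    have heq : a • u + b • v = (a - b) • u + (2 * b) • m := by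
      rw [hm_def, smul_smul]
      rw [show (2 * b) * (1 / 2 : ℝ) = b by ring]
      rw [smul_add, sub_smul]
      abel
    have h1 := (key (a - b) (2 * b) (by linarith) (by linarith)).1
    rw [heq]
    calc ν.toFun ((a - b) • u + (2 * b) • m) ≤ _ := h1
    _ < (a - b) * 1 + (2 * b) * 1 := by
        have := mul_lt_mul_of_pos_left hm (show (0:ℝ) < 2 * b by linarith)
        have h2 : (a - b) * ν.toFun u = (a - b) * 1 := by rw [← hu1]
        linarith
    _ = 1 := by linarith
  · -- a < b ;  a•u + b•v = (b-a)•v + (2a)•m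
    have heq : a • u + b • v = (b - a) • v + (2 * a) • m := by
      rw [hm_def, smul_smul]
      rw [show (2 * a) * (1 / 2 : ℝ) = a by ring]
      rw [smul_add, sub_smul]
      abel
    have h1 := (key (b - a) (2 * a) (by linarith) (by linarith)).2
    rw [heq]
    calc ν.toFun ((b - a) • v + (2 * a) • m) ≤ _ := h1
    _ < (b - a) * 1 + (2 * a) * 1 := by
        have := mul_lt_mul_of_pos_left hm (show (0:ℝ) < 2 * a by linarith)
        have h2 : (b - a) * ν.toFun v = (b - a) * 1 := by rw [← hv1]
        linarith
    _ = 1 := by linarith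

lemma sphere_convInd (ν : StrictNorm d) (A : Set (Fin d → ℝ))
    (hA : ∀ x ∈ A, ν.toFun x = 1) : ConvInd A := by
  intro p hp hmem
  set B := {y : Fin d → ℝ | ν.toFun y ≤ 1} with hB_def
  have hBconv : Convex ℝ B := sn_ball_convex ν
  have hpe : p ∈ B.extremePoints ℝ := by
    rw [mem_extremePoints]
    refine ⟨(hA p hp).le, ?_⟩
    intro y hy z hz hseg
    obtain ⟨a, b, ha, hb, hab, hx⟩ := hseg
    by_cases hyz : y = z
    · subst hyz
      have : a • y + b • y = y := by rw [← add_smul, hab, one_smul]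
      rw [this] at hx
      exact ⟨hx, hx⟩
    · exfalso
      have := sn_strict_seg ν y z hy hz hyz a b ha hb hab
      rw [hx, hA p hp] at this
      exact lt_irrefl 1 this
  have hsub : convexHull ℝ (A \ {p}) ⊆ B :=
    convexHull_min (fun x hx => (hA x hx.1).le) hBconv
  have h1 : IsExtreme ℝ B {p} := isExtreme_singleton.2 hpe
  have h2 : IsExtreme ℝ (convexHull ℝ (A \ {p})) {p} :=
    h1.mono hsub (Set.singleton_subset_iff.2 hmem)
  have h3 : p ∈ (convexHull ℝ (A \ {p})).extremePoints ℝ := isExtreme_singleton.1 h2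
  exact (extremePoints_convexHull_subset h3).2 rfl

/-- The Euclidean norm as a strict norm on `ℝ^d`. -/
noncomputable def eucStrictNorm (d : ℕ) : StrictNorm d where
  toFun x := ‖(WithLp.equiv 2 (Fin d → ℝ)).symm x‖
  eq_zero_iff x := by simp only [norm_eq_zero]; simp
  smul_eq a x := by
    try dsimp only
    rw [show (WithLp.equiv 2 (Fin d → ℝ)).symm (a • x)
        = a • (WithLp.equiv 2 (Fin d → ℝ)).symm x from rfl, norm_smul]
    simp
  add_le x y := by
    try dsimp only
    rw [show (WithLp.equiv 2 (Fin d → ℝ)).symm (x + y)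
        = (WithLp.equiv 2 (Fin d → ℝ)).symm x + (WithLp.equiv 2 (Fin d → ℝ)).symm y from rfl]
    exact norm_add_le _ _
  strictly_convex x y hx hy hxy := by
    try dsimp only at hx hy ⊢
    have h := (norm_midpoint_lt_iff
      (x := (WithLp.equiv 2 (Fin d → ℝ)).symm x)
      (y := (WithLp.equiv 2 (Fin d → ℝ)).symm y) (by rw [hx, hy])).2
      (fun hc => hxy ((WithLp.equiv 2 (Fin d → ℝ)).symm.injective hc))
    rw [hx] at h
    exact h

end TwoWMAux

open TwoWMAux in
/-- For every `d ≥ 2` and `n ≥ 1`, `2 · W_d(n) ≤ M_d(n,n)`. -/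
theorem two_W_le_M (d n : ℕ) (hd : 2 ≤ d) (hn : 1 ≤ n) :
    2 * Wfun d n ≤ Mfun d n n := by
  classical
  have hne : Nonempty (Fin d) := ⟨⟨0, by omega⟩⟩
  have hinf : Infinite (Fin d → ℝ) := Pi.infinite_of_right
  -- the Wfun defining set
  set A := {k | ∃ (S : Finset (Fin d → ℝ)) (ν : StrictNorm d)
      (T : Finset ((Fin d → ℝ) × (Fin d → ℝ))),
    S.card = n ∧
    (∀ e ∈ T, e.1 ∈ S ∧ e.2 ∈ S ∧ ν.toFun (e.1 - e.2) = 1) ∧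
    (∀ e ∈ T, ∀ f ∈ T, e ≠ f → ∀ c : ℝ, e.1 - e.2 ≠ c • (f.1 - f.2)) ∧
    T.card = k} with hA_def
  have hAbdd : BddAbove A := by
    refine ⟨n * n, ?_⟩
    rintro k ⟨S, ν, T, hS, hT1, _, hTc⟩
    have hsub : T ⊆ S ×ˢ S := by
      intro e he
      rcases hT1 e he with ⟨h1, h2, _⟩
      exact Finset.mem_product.2 ⟨h1, h2⟩
    calc k = T.card := hTc.symm
    _ ≤ (S ×ˢ S).card := Finset.card_le_card hsub
    _ = n * n := by rw [Finset.card_product, hS]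
  have hAne : A.Nonempty := by
    obtain ⟨S, hS⟩ := Infinite.exists_subset_card_eq (Fin d → ℝ) n
    exact ⟨0, S, eucStrictNorm d, ∅, hS, by simp, by simp, rfl⟩
  have hWmem : Wfun d n ∈ A := by
    rw [show Wfun d n = sSup A from rfl]
    exact Nat.sSup_mem hAne hAbdd
  obtain ⟨S, ν, T, hS, hT1, hT2, hTc⟩ := hWmem
  -- build the witness for Mfun
  set f : (Fin d → ℝ) × (Fin d → ℝ) → (Fin d → ℝ) := fun e => e.1 - e.2 with hf_def
  set g : (Fin d → ℝ) × (Fin d → ℝ) → (Fin d → ℝ) := fun e => e.2 - e.1 with hg_def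
  have hone : ∀ e ∈ T, ν.toFun (f e) = 1 := fun e he => (hT1 e he).2.2
  have honeg : ∀ e ∈ T, ν.toFun (g e) = 1 := by
    intro e he
    have : g e = -(f e) := by simp [hf_def, hg_def]
    rw [this, sn_neg]
    exact hone e he
  have hfg : ∀ e ∈ T, f e ≠ g e := by
    intro e he hc
    have hc2 : e.1 - e.2 = e.2 - e.1 := hc
    have h0 : e.1 - e.2 = -(e.1 - e.2) := by rw [neg_sub]; exact hc2
    have h2 : (2 : ℝ) • (e.1 - e.2) = 0 := by
      rw [two_smul]; exact eq_neg_iff_add_eq_zero.1 h0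
    have h1 : e.1 - e.2 = (0 : Fin d → ℝ) :=
      (smul_eq_zero.1 h2).resolve_left (by norm_num)
    have h3 : ν.toFun (e.1 - e.2) = 1 := hone e he
    rw [h1, (ν.eq_zero_iff 0).2 rfl] at h3
    norm_num at h3
  have hfinj : Set.InjOn f ↑T := by
    intro e he e' he' hc
    by_contra hne'
    exact hT2 e (by exact_mod_cast he) e' (by exact_mod_cast he') hne' 1 (by rw [one_smul]; exact hc)
  have hginj : Set.InjOn g ↑T := by
    intro e he e' he' hc
    have : f e = f e' := by
      have : -(g e) = -(g e') := by rw [hc]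
      simpa [hf_def, hg_def] using this
    exact hfinj he he' this
  have hdisj : Disjoint (T.image f) (T.image g) := by
    rw [Finset.disjoint_left]
    rintro a ha hb
    obtain ⟨e, he, rfl⟩ := Finset.mem_image.1 ha
    obtain ⟨e', he', hee'⟩ := Finset.mem_image.1 hb
    by_cases hc : e = e'
    · subst hc; exact hfg e he hee'.symm
    · refine hT2 e he e' he' hc (-1) ?_
      have hee2 : e'.2 - e'.1 = e.1 - e.2 := hee'
      rw [neg_one_smul, neg_sub]
      exact hee2.symm
  set S' : Finset (Fin d → ℝ) := T.image f ∪ T.image g with hS'_def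
  have hS'card : S'.card = 2 * T.card := by
    rw [hS'_def, Finset.card_union_of_disjoint hdisj,
      Finset.card_image_of_injOn hfinj, Finset.card_image_of_injOn hginj]
    ring
  set Q : Finset (Fin d → ℝ) := S.image (fun x => -x) with hQ_def
  have hQcard : Q.card = n := by
    rw [hQ_def, Finset.card_image_of_injective _ neg_injective, hS]
  have hS'mem : ∀ x ∈ S', ν.toFun x = 1 := by
    intro x hx
    rcases Finset.mem_union.1 hx with h | h
    · obtain ⟨e, he, rfl⟩ := Finset.mem_image.1 h; exact hone e he
    · obtain ⟨e, he, rfl⟩ := Finset.mem_image.1 h; exact honeg e he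
  have hS'sub : (S' : Set (Fin d → ℝ)) ⊆ (S : Set (Fin d → ℝ)) + (Q : Set (Fin d → ℝ)) := by
    intro x hx
    have hx' : x ∈ S' := by exact_mod_cast hx
    rcases Finset.mem_union.1 hx' with h | h
    · obtain ⟨e, he, rfl⟩ := Finset.mem_image.1 h
      refine Set.mem_add.2 ⟨e.1, by exact_mod_cast (hT1 e he).1, -e.2, ?_, ?_⟩
      · exact_mod_cast Finset.mem_image.2 ⟨e.2, (hT1 e he).2.1, rfl⟩
      · simp [hf_def, sub_eq_add_neg]
    · obtain ⟨e, he, rfl⟩ := Finset.mem_image.1 h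
      refine Set.mem_add.2 ⟨e.2, by exact_mod_cast (hT1 e he).2.1, -e.1, ?_, ?_⟩
      · exact_mod_cast Finset.mem_image.2 ⟨e.1, (hT1 e he).1, rfl⟩
      · simp [hg_def, sub_eq_add_neg]
  have hS'ci : ConvInd (S' : Set (Fin d → ℝ)) :=
    sphere_convInd ν _ (fun x hx => hS'mem x (by exact_mod_cast hx))
  -- conclude
  have hMbdd : BddAbove {k | ∃ P Q S : Finset (Fin d → ℝ),
      P.card = n ∧ Q.card = n ∧
      (S : Set (Fin d → ℝ)) ⊆ (P : Set (Fin d → ℝ)) + (Q : Set (Fin d → ℝ)) ∧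
      ConvInd (S : Set (Fin d → ℝ)) ∧ S.card = k} := by
    refine ⟨n * n, ?_⟩
    rintro k ⟨P, Q', S'', hP, hQ', hsub, _, hcard⟩
    have hsub2 : S'' ⊆ P + Q' := by
      rw [← Finset.coe_subset, Finset.coe_add]
      exact hsub
    calc k = S''.card := hcard.symm
    _ ≤ (P + Q').card := Finset.card_le_card hsub2
    _ ≤ P.card * Q'.card := Finset.card_add_le
    _ = n * n := by rw [hP, hQ']
  have hmem : 2 * Wfun d n ∈ {k | ∃ P Q S : Finset (Fin d → ℝ),
      P.card = n ∧ Q.card = n ∧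
      (S : Set (Fin d → ℝ)) ⊆ (P : Set (Fin d → ℝ)) + (Q : Set (Fin d → ℝ)) ∧
      ConvInd (S : Set (Fin d → ℝ)) ∧ S.card = k} :=
    ⟨S, Q, S', hS, hQcard, hS'sub, hS'ci, by rw [hS'card, hTc]⟩
  exact le_csSup hMbdd hmem
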